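/- arXiv:0807.4383 — 2 statements merged into one kernel-verified Lean document; each statement's English description precedes it below -/
import Mathlib

section
/- (Weak self-duality) Let E₁ and E₂ be real vector spaces, Φ : E₁ × E₂ → ℝ a bilinear form, C₁ ⊆ E₁ a set (the cone of effects of system 1), Σ₂ a set of linear functionals on E₂ (the cone of states of system 2), and Λ₁ a set of linear functionals on E₁ (the states of system 1). Assume: (i) Φ(a,·) ∈ Σ₂ for every a ∈ C₁; (ii) Φ is preparationally faithful with respect to system 1: for every σ ∈ Σ₂ there exists a ∈ C₁ with Φ(a,·) = σ; (iii) Φ is preparationally faithful with respect to system 2: for every λ ∈ Λ₁ there exists y ∈ E₂ with λ(a) = Φ(a,y) for all a ∈ E₁; (iv) Λ₁ separates E₁: if λ(a) = λ(a') for all λ ∈ Λ₁ then a = a'. Then the map a ↦ Φ(a,·) is injective on E₁ and restricts to a bijection from C₁ onto Σ₂, establishing the cone-isomorphism between the cone of effects of system 1 and the cone of states of system 2. -/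
/-- Weak self-duality: a state that is preparationally faithful with respect to
both systems induces, via `a ↦ Φ(a,·)`, an injective map on effects restricting
to a bijection from the cone of effects of system 1 onto the cone of states of
system 2. -/
theorem weak_self_duality
    {E₁ E₂ : Type*} [AddCommGroup E₁] [Module ℝ E₁] [AddCommGroup E₂] [Module ℝ E₂]
    (Φ : E₁ →ₗ[ℝ] E₂ →ₗ[ℝ] ℝ)
    (C₁ : Set E₁)
    (Sig₂ : Set (E₂ →ₗ[ℝ] ℝ))
    (Lam₁ : Set (E₁ →ₗ[ℝ] ℝ))
    (hmap : ∀ a ∈ C₁, (Φ a : E₂ →ₗ[ℝ] ℝ) ∈ Sig₂)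
    (hprep1 : ∀ σ ∈ Sig₂, ∃ a ∈ C₁, (Φ a : E₂ →ₗ[ℝ] ℝ) = σ)
    (hprep2 : ∀ lam ∈ Lam₁, ∃ y : E₂, ∀ a : E₁, lam a = Φ a y)
    (hsep : ∀ a a' : E₁, (∀ lam ∈ Lam₁, lam a = lam a') → a = a') :
    Function.Injective (fun a : E₁ => (Φ a : E₂ →ₗ[ℝ] ℝ)) ∧
    Set.BijOn (fun a : E₁ => (Φ a : E₂ →ₗ[ℝ] ℝ)) C₁ Sig₂ := by
  have hinj : Function.Injective (fun a : E₁ => (Φ a : E₂ →ₗ[ℝ] ℝ)) := by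
    intro a a' h
    apply hsep
    intro lam hlam
    obtain ⟨y, hy⟩ := hprep2 lam hlam
    rw [hy, hy]
    exact congrArg (fun f => f y) h
  refine ⟨hinj, hmap, hinj.injOn, ?_⟩
  intro σ hσ
  obtain ⟨a, ha, hΦ⟩ := hprep1 σ hσ
  exact ⟨a, ha, hΦ⟩
end

section
/- Let E be a finite-dimensional real vector space, V a real vector space, ι : E ⊗ E → V an injective linear map (the embedding of products of local effects into bipartite effects), T a linear subspace of End(E) (the real span of the transformations, acting linearly on effects), and f : T → V a surjective linear map (the map A ↦ (A,I)Φ induced by a preparationally faithful state, composed with the identification of bipartite states with bipartite effects). Then: f is injective, hence a linear isomorphism; T = End(E), i.e., the linear space of transformations is full; ι is surjective, i.e., the space of bipartite effects coincides with the tensor product E ⊗ E; and dim V = (dim E)². -/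
open TensorProduct

/-- Tensor-product structure and local observability: if products of local
effects embed injectively into the bipartite effect space `V` and a
preparationally faithful state induces a surjective linear map from the span
`T` of transformations onto `V`, then that map is an isomorphism, the span of
transformations is full (`T = End(E)`), the bipartite effect space coincides
with the tensor product `E ⊗ E`, and `dim V = (dim E)²`. -/
theorem tensor_product_structure_of_bipartite_effects
    {E V : Type*} [AddCommGroup E] [Module ℝ E] [FiniteDimensional ℝ E]
    [AddCommGroup V] [Module ℝ V]
    (ι : E ⊗[ℝ] E →ₗ[ℝ] V) (hι : Function.Injective ι)
    (T : Submodule ℝ (E →ₗ[ℝ] E))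
    (f : T →ₗ[ℝ] V) (hf : Function.Surjective f) :
    Function.Injective f ∧
    T = ⊤ ∧
    Function.Surjective ι ∧
    Module.finrank ℝ V = (Module.finrank ℝ E) ^ 2 := by
  have hVfin : FiniteDimensional ℝ V := Module.Finite.of_surjective f hf
  have hrank1 : Module.finrank ℝ V ≤ Module.finrank ℝ T := by
    calc Module.finrank ℝ V = Module.finrank ℝ (LinearMap.range f) := by
          rw [LinearMap.range_eq_top.mpr hf, finrank_top]
      _ ≤ Module.finrank ℝ T := LinearMap.finrank_range_le f
  have hrank2 : Module.finrank ℝ T ≤ Module.finrank ℝ E * Module.finrank ℝ E := by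
    have := Submodule.finrank_le T
    rwa [Module.finrank_linearMap] at this
  have hrank3 : Module.finrank ℝ E * Module.finrank ℝ E ≤ Module.finrank ℝ V := by
    have := LinearMap.finrank_le_finrank_of_injective hι
    rwa [Module.finrank_tensorProduct] at this
  have hVT : Module.finrank ℝ V = Module.finrank ℝ T := by omega
  have hTfull : Module.finrank ℝ T = Module.finrank ℝ E * Module.finrank ℝ E :=
    by omega
  have hV : Module.finrank ℝ V = Module.finrank ℝ E * Module.finrank ℝ E := by omega
  refine ⟨?_, ?_, ?_, by rw [hV, sq]⟩
  · exact (LinearMap.injective_iff_surjective_of_finrank_eq_finrank hVT.symm).mpr hf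
  · apply Submodule.eq_top_of_finrank_eq
    rw [hTfull, Module.finrank_linearMap]
  · refine (LinearMap.injective_iff_surjective_of_finrank_eq_finrank ?_).mp hι
    rw [Module.finrank_tensorProduct, hV]
end
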